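/- Let n ≥ 2, g ≥ 2, let B = V × V^c be a block in [n] × [n], and let M₁, …, M_{2g} ∈ SO(2n+1) be matrices each of the following form: the (2n+1)-st row and column equal (0, …, 0, 1), and for all 1 ≤ i, j ≤ n the (i,j)-th 2×2 block is of the form [[x, −y],[y, x]] if (i,j) ∉ B ∪ B̄, and of the form [[w, z],[z, −w]] if (i,j) ∈ B ∪ B̄ (x, y, w, z real, depending on i, j and the matrix). Then the product of commutators ∏_{l=1}^{g} [M_{2l−1}, M_{2l}] is not a generic element of T. -/

import Mathlib

open Matrix Real

/-- Index `2i` (0-based; row `2i-1` in 1-based numbering) in `Fin (2n+1)`. -/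
def ia {n : ℕ} (i : Fin n) : Fin (2*n+1) := ⟨2*i.val, by have := i.isLt; omega⟩

/-- Index `2i+1` (0-based; row `2i` in 1-based numbering) in `Fin (2n+1)`. -/
def ib {n : ℕ} (i : Fin n) : Fin (2*n+1) := ⟨2*i.val+1, by have := i.isLt; omega⟩

/-- The last index `2n` in `Fin (2n+1)`. -/
def ilast (n : ℕ) : Fin (2*n+1) := ⟨2*n, by omega⟩

/-- Membership in SO(2n+1). -/
def SOodd (n : ℕ) (M : Matrix (Fin (2*n+1)) (Fin (2*n+1)) ℝ) : Prop :=
  M * Mᵀ = 1 ∧ M.det = 1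

/-- The block-diagonal torus element `diag(R(θ₁), …, R(θₙ), 1)` of SO(2n+1). -/
noncomputable def torusMat (n : ℕ) (θ : Fin n → ℝ) :
    Matrix (Fin (2*n+1)) (Fin (2*n+1)) ℝ :=
  Matrix.of fun r c =>
    if hr : r.val < 2*n then
      if c.val < 2*n then
        if r.val / 2 = c.val / 2 then
          if r.val % 2 = 0 then
            if c.val % 2 = 0 then Real.cos (θ ⟨r.val/2, by omega⟩)
            else -Real.sin (θ ⟨r.val/2, by omega⟩)
          else
            if c.val % 2 = 0 then Real.sin (θ ⟨r.val/2, by omega⟩)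
            else Real.cos (θ ⟨r.val/2, by omega⟩)
        else 0
      else 0
    else if c.val < 2*n then 0 else 1

/-- `(θ₁, …, θₙ)` is a generic torus element: its centralizer in SO(2n+1) is exactly
the torus, and the only `λ ∈ {-1,0,1}ⁿ` with `λ·θ ∈ 2πℤ` is `λ = 0`. -/
noncomputable def IsGeneric (n : ℕ) (θ : Fin n → ℝ) : Prop :=
  (∀ M, SOodd n M → M * torusMat n θ = torusMat n θ * M →
      ∃ φ : Fin n → ℝ, M = torusMat n φ) ∧
  (∀ lam : Fin n → ℤ, (∀ i, lam i = -1 ∨ lam i = 0 ∨ lam i = 1) →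
      (∃ k : ℤ, ∑ i, (lam i : ℝ) * θ i = 2 * Real.pi * k) → ∀ i, lam i = 0)

/-- Commutator of matrices: `[P,Q] = P Q P⁻¹ Q⁻¹`. -/
noncomputable def commMat (n : ℕ) (P Q : Matrix (Fin (2*n+1)) (Fin (2*n+1)) ℝ) :
    Matrix (Fin (2*n+1)) (Fin (2*n+1)) ℝ :=
  P * Q * P⁻¹ * Q⁻¹

-- trichotomy
lemma tri {n : ℕ} (r : Fin (2*n+1)) :
    (∃ i : Fin n, r = ia i) ∨ (∃ i : Fin n, r = ib i) ∨ r = ilast n := by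
  rcases Nat.lt_or_ge r.val (2*n) with h | h
  · rcases Nat.even_or_odd r.val with ⟨m, hm⟩ | ⟨m, hm⟩
    · exact Or.inl ⟨⟨m, by omega⟩, by apply Fin.ext; simp [ia]; omega⟩
    · exact Or.inr (Or.inl ⟨⟨m, by omega⟩, by apply Fin.ext; simp [ib]; omega⟩)
  · exact Or.inr (Or.inr (by apply Fin.ext; simp [ilast]; omega))

def sumEquiv (n : ℕ) : (Fin n × Fin 2) ⊕ Unit ≃ Fin (2*n+1) where
  toFun x := match x with
    | .inl (i, b) => ⟨2*i.val + b.val, by have := i.isLt; have := b.isLt; omega⟩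
    | .inr _ => ilast n
  invFun r := if h : r.val < 2*n then .inl (⟨r.val/2, by omega⟩, ⟨r.val % 2, by omega⟩)
    else .inr ()
  left_inv x := by
    rcases x with ⟨i, b⟩ | ⟨⟩
    · have := i.isLt; have := b.isLt
      simp only []
      rw [dif_pos (by omega)]
      congr 1
      · ext <;> simp <;> omega
    · simp only [ilast]
      exact dif_neg (by omega)
  right_inv r := by
    by_cases h : r.val < 2*n
    · simp only [dif_pos h]
      apply Fin.ext; simp; omega
    · simp only [dif_neg h]
      apply Fin.ext; simp [ilast]; omega

lemma sum_split {n : ℕ} {M : Type*} [AddCommMonoid M] (f : Fin (2*n+1) → M) :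
    ∑ k, f k = (∑ j : Fin n, (f (ia j) + f (ib j))) + f (ilast n) := by
  rw [← Equiv.sum_comp (sumEquiv n) f]
  rw [Fintype.sum_sum_type, Fintype.sum_prod_type]
  simp only [Fin.sum_univ_two]
  have h1 : ∀ j : Fin n, (sumEquiv n) (Sum.inl (j, 0)) = ia j := by
    intro j; apply Fin.ext; simp [sumEquiv, ia]
  have h2 : ∀ j : Fin n, (sumEquiv n) (Sum.inl (j, 1)) = ib j := by
    intro j; apply Fin.ext; simp [sumEquiv, ib]
  simp only [h1, h2]
  simp [sumEquiv]

-- index facts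
lemma ia_inj {n : ℕ} {i j : Fin n} : ia i = ia j ↔ i = j := by
  constructor
  · intro h; apply Fin.ext
    have := congrArg Fin.val h; simp [ia] at this; omega
  · rintro rfl; rfl

lemma ib_inj {n : ℕ} {i j : Fin n} : ib i = ib j ↔ i = j := by
  constructor
  · intro h; apply Fin.ext
    have := congrArg Fin.val h; simp [ib] at this; omega
  · rintro rfl; rfl

lemma ia_ne_ib {n : ℕ} (i j : Fin n) : ia i ≠ ib j := by
  intro h; have := congrArg Fin.val h; simp [ia, ib] at this; omega

lemma ia_ne_il {n : ℕ} (i : Fin n) : ia i ≠ ilast n := by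
  intro h; rw [Fin.ext_iff] at h; have := i.isLt; simp only [ia, ilast] at h; omega

lemma ib_ne_il {n : ℕ} (i : Fin n) : ib i ≠ ilast n := by
  intro h; rw [Fin.ext_iff] at h; have := i.isLt; simp only [ib, ilast] at h; omega

noncomputable def phi (n : ℕ) (A : Matrix (Fin n) (Fin n) ℂ) :
    Matrix (Fin (2*n+1)) (Fin (2*n+1)) ℝ :=
  Matrix.of fun r c =>
    if hr : r.val < 2*n then
      if hc : c.val < 2*n then
        if r.val % 2 = 0 then
          if c.val % 2 = 0 then (A ⟨r.val/2, by omega⟩ ⟨c.val/2, by omega⟩).re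
          else -(A ⟨r.val/2, by omega⟩ ⟨c.val/2, by omega⟩).im
        else
          if c.val % 2 = 0 then (A ⟨r.val/2, by omega⟩ ⟨c.val/2, by omega⟩).im
          else (A ⟨r.val/2, by omega⟩ ⟨c.val/2, by omega⟩).re
      else 0
    else if c.val < 2*n then 0 else 1

section Phi
variable {n : ℕ} (A : Matrix (Fin n) (Fin n) ℂ) (i j : Fin n)

lemma phi_aa : phi n A (ia i) (ia j) = (A i j).re := by
  have hi := i.isLt; have hj := j.isLt
  simp only [phi, ia, Matrix.of_apply]
  rw [dif_pos (by omega), dif_pos (by omega), if_pos (by omega), if_pos (by omega)]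
  have e1 : (⟨2 * i.val / 2, by omega⟩ : Fin n) = i := by apply Fin.ext; simp only []; omega
  have e2 : (⟨2 * j.val / 2, by omega⟩ : Fin n) = j := by apply Fin.ext; simp only []; omega
  rw [e1, e2]

lemma phi_ab : phi n A (ia i) (ib j) = -(A i j).im := by
  have hi := i.isLt; have hj := j.isLt
  simp only [phi, ia, ib, Matrix.of_apply]
  rw [dif_pos (by omega), dif_pos (by omega), if_pos (by omega), if_neg (by omega)]
  have e1 : (⟨2 * i.val / 2, by omega⟩ : Fin n) = i := by apply Fin.ext; simp only []; omega
  have e2 : (⟨(2 * j.val + 1) / 2, by omega⟩ : Fin n) = j := by apply Fin.ext; simp only []; omega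
  rw [e1, e2]

lemma phi_ba : phi n A (ib i) (ia j) = (A i j).im := by
  have hi := i.isLt; have hj := j.isLt
  simp only [phi, ia, ib, Matrix.of_apply]
  rw [dif_pos (by omega), dif_pos (by omega), if_neg (by omega), if_pos (by omega)]
  have e1 : (⟨(2 * i.val + 1) / 2, by omega⟩ : Fin n) = i := by apply Fin.ext; simp only []; omega
  have e2 : (⟨2 * j.val / 2, by omega⟩ : Fin n) = j := by apply Fin.ext; simp only []; omega
  rw [e1, e2]

lemma phi_bb : phi n A (ib i) (ib j) = (A i j).re := by
  have hi := i.isLt; have hj := j.isLt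
  simp only [phi, ib, Matrix.of_apply]
  rw [dif_pos (by omega), dif_pos (by omega), if_neg (by omega), if_neg (by omega)]
  have e1 : (⟨(2 * i.val + 1) / 2, by omega⟩ : Fin n) = i := by apply Fin.ext; simp only []; omega
  have e2 : (⟨(2 * j.val + 1) / 2, by omega⟩ : Fin n) = j := by apply Fin.ext; simp only []; omega
  rw [e1, e2]

lemma phi_al : phi n A (ia i) (ilast n) = 0 := by
  have hi := i.isLt
  simp only [phi, ia, ilast, Matrix.of_apply]
  rw [dif_pos (by omega), dif_neg (by omega)]

lemma phi_bl : phi n A (ib i) (ilast n) = 0 := by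
  have hi := i.isLt
  simp only [phi, ib, ilast, Matrix.of_apply]
  rw [dif_pos (by omega), dif_neg (by omega)]

lemma phi_la : phi n A (ilast n) (ia i) = 0 := by
  have hi := i.isLt
  simp only [phi, ia, ilast, Matrix.of_apply]
  rw [dif_neg (by omega), if_pos (by omega)]

lemma phi_lb : phi n A (ilast n) (ib i) = 0 := by
  have hi := i.isLt
  simp only [phi, ib, ilast, Matrix.of_apply]
  rw [dif_neg (by omega), if_pos (by omega)]

lemma phi_ll : phi n A (ilast n) (ilast n) = 1 := by
  simp only [phi, ilast, Matrix.of_apply]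
  rw [dif_neg (by omega), if_neg (by omega)]

lemma phi_one : phi n (1 : Matrix (Fin n) (Fin n) ℂ) = 1 := by
  funext r c
  rcases tri r with ⟨i, rfl⟩ | ⟨i, rfl⟩ | rfl <;>
    rcases tri c with ⟨j, rfl⟩ | ⟨j, rfl⟩ | rfl
  · rw [phi_aa]
    simp [Matrix.one_apply, ia_inj, apply_ite Complex.re]
  · rw [phi_ab]
    simp [Matrix.one_apply, ia_ne_ib, apply_ite Complex.im]
  · rw [phi_al]; simp [Matrix.one_apply, ia_ne_il]
  · rw [phi_ba, Matrix.one_apply_ne (Ne.symm (ia_ne_ib j i))]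
    simp [Matrix.one_apply, apply_ite Complex.im]
  · rw [phi_bb]
    simp [Matrix.one_apply, ib_inj, apply_ite Complex.re]
  · rw [phi_bl]; simp [Matrix.one_apply, ib_ne_il]
  · rw [phi_la]; simp [Matrix.one_apply, (ia_ne_il j).symm]
  · rw [phi_lb]; simp [Matrix.one_apply, (ib_ne_il j).symm]
  · rw [phi_ll]; simp [Matrix.one_apply]

lemma phi_inj {A B : Matrix (Fin n) (Fin n) ℂ} (h : phi n A = phi n B) : A = B := by
  funext i j
  apply Complex.ext
  · have := congrFun (congrFun h (ia i)) (ia j)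
    rwa [phi_aa, phi_aa] at this
  · have := congrFun (congrFun h (ib i)) (ia j)
    rwa [phi_ba, phi_ba] at this

end Phi

lemma phi_mul {n : ℕ} (A B : Matrix (Fin n) (Fin n) ℂ) :
    phi n (A * B) = phi n A * phi n B := by
  funext r c
  rw [Matrix.mul_apply, sum_split (fun k => phi n A r k * phi n B k c)]
  rcases tri r with ⟨i, rfl⟩ | ⟨i, rfl⟩ | rfl <;>
    rcases tri c with ⟨j, rfl⟩ | ⟨j, rfl⟩ | rfl
  · rw [phi_aa, phi_al, Matrix.mul_apply, Complex.re_sum]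
    simp only [phi_aa, phi_ab, phi_ba, phi_la, zero_mul, mul_zero, add_zero]
    apply Finset.sum_congr rfl
    intro k _
    rw [Complex.mul_re]; ring
  · rw [phi_ab, phi_al, Matrix.mul_apply, Complex.im_sum]
    simp only [phi_aa, phi_ab, phi_ba, phi_bb, phi_lb, zero_mul, mul_zero, add_zero]
    rw [neg_eq_iff_eq_neg, ← Finset.sum_neg_distrib]
    apply Finset.sum_congr rfl
    intro k _
    rw [Complex.mul_im]; ring
  · rw [phi_al, phi_al, phi_ll]
    simp only [phi_al, phi_bl, mul_zero, zero_mul, mul_one, add_zero, zero_add]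
    simp
  · rw [phi_ba, phi_bl, Matrix.mul_apply, Complex.im_sum]
    simp only [phi_aa, phi_ab, phi_ba, phi_bb, phi_la, zero_mul, mul_zero, add_zero]
    apply Finset.sum_congr rfl
    intro k _
    rw [Complex.mul_im]; ring
  · rw [phi_bb, phi_bl, Matrix.mul_apply, Complex.re_sum]
    simp only [phi_aa, phi_ab, phi_ba, phi_bb, phi_lb, zero_mul, mul_zero, add_zero]
    apply Finset.sum_congr rfl
    intro k _
    rw [Complex.mul_re]; ring
  · rw [phi_bl, phi_bl, phi_ll]
    simp only [phi_al, phi_bl, mul_zero, zero_mul, mul_one, add_zero, zero_add]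
    simp
  · rw [phi_la, phi_ll]
    simp only [phi_la, phi_lb, zero_mul, mul_zero, add_zero, zero_add, one_mul]
    simp [phi_la]
  · rw [phi_lb, phi_ll]
    simp only [phi_la, phi_lb, zero_mul, mul_zero, add_zero, zero_add, one_mul]
    simp [phi_lb]
  · rw [phi_ll, phi_ll]
    simp only [phi_la, phi_lb, zero_mul, mul_zero, add_zero, zero_add, one_mul]
    simp [phi_ll]

/-- complex-type matrices -/
def CT (n : ℕ) (N : Matrix (Fin (2*n+1)) (Fin (2*n+1)) ℝ) : Prop :=
  N (ilast n) (ilast n) = 1 ∧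
  (∀ i : Fin n, N (ia i) (ilast n) = 0 ∧ N (ib i) (ilast n) = 0 ∧
      N (ilast n) (ia i) = 0 ∧ N (ilast n) (ib i) = 0) ∧
  ∀ i j : Fin n, N (ib i) (ib j) = N (ia i) (ia j) ∧ N (ia i) (ib j) = - N (ib i) (ia j)

noncomputable def toC (n : ℕ) (N : Matrix (Fin (2*n+1)) (Fin (2*n+1)) ℝ) :
    Matrix (Fin n) (Fin n) ℂ :=
  Matrix.of fun i j => ⟨N (ia i) (ia j), N (ib i) (ia j)⟩

lemma toC_re {n : ℕ} (N) (i j : Fin n) : (toC n N i j).re = N (ia i) (ia j) := rfl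
lemma toC_im {n : ℕ} (N) (i j : Fin n) : (toC n N i j).im = N (ib i) (ia j) := rfl

lemma CT_phi_eq {n : ℕ} {N : Matrix (Fin (2*n+1)) (Fin (2*n+1)) ℝ} (h : CT n N) :
    phi n (toC n N) = N := by
  obtain ⟨h1, h2, h3⟩ := h
  funext r c
  rcases tri r with ⟨i, rfl⟩ | ⟨i, rfl⟩ | rfl <;>
    rcases tri c with ⟨j, rfl⟩ | ⟨j, rfl⟩ | rfl
  · rw [phi_aa, toC_re]
  · rw [phi_ab, toC_im, ← (h3 i j).2]
  · rw [phi_al, (h2 i).1]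
  · rw [phi_ba, toC_im]
  · rw [phi_bb, toC_re, (h3 i j).1]
  · rw [phi_bl, (h2 i).2.1]
  · rw [phi_la, (h2 j).2.2.1]
  · rw [phi_lb, (h2 j).2.2.2]
  · rw [phi_ll, h1]

lemma CT_transpose {n : ℕ} {N : Matrix (Fin (2*n+1)) (Fin (2*n+1)) ℝ} (h : CT n N) :
    CT n Nᵀ := by
  obtain ⟨h1, h2, h3⟩ := h
  refine ⟨h1, fun i => ⟨(h2 i).2.2.1, (h2 i).2.2.2, (h2 i).1, (h2 i).2.1⟩, fun i j => ?_⟩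
  constructor
  · exact (h3 j i).1
  · simp only [Matrix.transpose_apply]
    rw [(h3 j i).2]; ring

section Torus
variable {n : ℕ} (θ : Fin n → ℝ) (i j : Fin n)

lemma tor_aa : torusMat n θ (ia i) (ia j) = if i = j then Real.cos (θ i) else 0 := by
  have hi := i.isLt; have hj := j.isLt
  simp only [torusMat, ia, Matrix.of_apply]
  rw [dif_pos (by omega), if_pos (by omega)]
  by_cases h : i = j
  · subst h
    rw [if_pos rfl, if_pos (by omega), if_pos (by omega), if_pos (by omega)]
    have e1 : (⟨2 * i.val / 2, by omega⟩ : Fin n) = i := by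
      apply Fin.ext; simp only []; omega
    rw [e1]
  · have hne : i.val ≠ j.val := fun hh => h (Fin.ext hh)
    rw [if_neg (by omega), if_neg h]

lemma tor_ab : torusMat n θ (ia i) (ib j) = if i = j then -Real.sin (θ i) else 0 := by
  have hi := i.isLt; have hj := j.isLt
  simp only [torusMat, ia, ib, Matrix.of_apply]
  rw [dif_pos (by omega), if_pos (by omega)]
  by_cases h : i = j
  · subst h
    rw [if_pos (by omega), if_pos (by omega), if_neg (by omega), if_pos rfl]
    have e1 : (⟨2 * i.val / 2, by omega⟩ : Fin n) = i := by
      apply Fin.ext; simp only []; omega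
    rw [e1]
  · have hne : i.val ≠ j.val := fun hh => h (Fin.ext hh)
    rw [if_neg (by omega), if_neg h]

lemma tor_ba : torusMat n θ (ib i) (ia j) = if i = j then Real.sin (θ i) else 0 := by
  have hi := i.isLt; have hj := j.isLt
  simp only [torusMat, ia, ib, Matrix.of_apply]
  rw [dif_pos (by omega), if_pos (by omega)]
  by_cases h : i = j
  · subst h
    rw [if_pos (by omega), if_neg (by omega), if_pos (by omega), if_pos rfl]
    have e1 : (⟨(2 * i.val + 1) / 2, by omega⟩ : Fin n) = i := by
      apply Fin.ext; simp only []; omega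
    rw [e1]
  · have hne : i.val ≠ j.val := fun hh => h (Fin.ext hh)
    rw [if_neg (by omega), if_neg h]

lemma tor_bb : torusMat n θ (ib i) (ib j) = if i = j then Real.cos (θ i) else 0 := by
  have hi := i.isLt; have hj := j.isLt
  simp only [torusMat, ib, Matrix.of_apply]
  rw [dif_pos (by omega), if_pos (by omega)]
  by_cases h : i = j
  · subst h
    rw [if_pos (by omega), if_neg (by omega), if_neg (by omega), if_pos rfl]
    have e1 : (⟨(2 * i.val + 1) / 2, by omega⟩ : Fin n) = i := by
      apply Fin.ext; simp only []; omega
    rw [e1]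
  · have hne : i.val ≠ j.val := fun hh => h (Fin.ext hh)
    rw [if_neg (by omega), if_neg h]

lemma tor_al : torusMat n θ (ia i) (ilast n) = 0 := by
  have hi := i.isLt
  simp only [torusMat, ia, ilast, Matrix.of_apply]
  rw [dif_pos (by omega), if_neg (by omega)]

lemma tor_bl : torusMat n θ (ib i) (ilast n) = 0 := by
  have hi := i.isLt
  simp only [torusMat, ib, ilast, Matrix.of_apply]
  rw [dif_pos (by omega), if_neg (by omega)]

lemma tor_la : torusMat n θ (ilast n) (ia i) = 0 := by
  have hi := i.isLt
  simp only [torusMat, ia, ilast, Matrix.of_apply]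
  rw [dif_neg (by omega), if_pos (by omega)]

lemma tor_lb : torusMat n θ (ilast n) (ib i) = 0 := by
  have hi := i.isLt
  simp only [torusMat, ib, ilast, Matrix.of_apply]
  rw [dif_neg (by omega), if_pos (by omega)]

lemma tor_ll : torusMat n θ (ilast n) (ilast n) = 1 := by
  simp only [torusMat, ilast, Matrix.of_apply]
  rw [dif_neg (by omega), if_neg (by omega)]

end Torus

/-- the diagonal sign function -/
noncomputable def din (n : ℕ) (V : Finset (Fin n)) : Fin (2*n+1) → ℝ := fun r =>
  if h : r.val < 2*n then
    (if (⟨r.val/2, by omega⟩ : Fin n) ∈ V then 1 else if r.val % 2 = 0 then 1 else -1)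
  else 1

noncomputable def Kmat (n : ℕ) (V : Finset (Fin n)) :
    Matrix (Fin (2*n+1)) (Fin (2*n+1)) ℝ := Matrix.diagonal (din n V)

section Kfacts
variable {n : ℕ} (V : Finset (Fin n)) (i : Fin n)

lemma din_ia : din n V (ia i) = 1 := by
  have hi := i.isLt
  rw [din, dif_pos (show (ia i).val < 2*n by simp only [ia]; omega)]
  split <;> simp [ia]

lemma din_ib : din n V (ib i) = if i ∈ V then 1 else -1 := by
  have hi := i.isLt
  rw [din, dif_pos (show (ib i).val < 2*n by simp only [ib]; omega)]
  have e1 : (⟨(ib i).val / 2, by simp only [ib]; omega⟩ : Fin n) = i := by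
    apply Fin.ext; simp only [ib]; omega
  rw [e1]
  split
  · rfl
  · rw [if_neg (show ¬ (ib i).val % 2 = 0 by simp only [ib]; omega)]

lemma din_il : din n V (ilast n) = 1 := by
  simp only [din, ilast]
  exact dif_neg (by omega)

lemma din_sq : ∀ r, din n V r * din n V r = 1 := by
  intro r
  simp only [din]
  split
  · split
    · norm_num
    · split <;> norm_num
  · norm_num

lemma Kmat_mul_self : Kmat n V * Kmat n V = 1 := by
  rw [Kmat, Matrix.diagonal_mul_diagonal]
  rw [show (fun i => din n V i * din n V i) = fun _ => (1:ℝ) from funext (din_sq V)]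
  exact Matrix.diagonal_one

lemma Kmat_transpose : (Kmat n V)ᵀ = Kmat n V := Matrix.diagonal_transpose _

lemma conj_apply (N : Matrix (Fin (2*n+1)) (Fin (2*n+1)) ℝ) (r c : Fin (2*n+1)) :
    (Kmat n V * N * Kmat n V) r c = din n V r * N r c * din n V c := by
  rw [Kmat, Matrix.mul_diagonal, Matrix.diagonal_mul]

end Kfacts

lemma mem_block_iff {n : ℕ} (V : Finset (Fin n)) (i j : Fin n) :
    (i, j) ∈ (V ×ˢ Vᶜ) ∪ (V ×ˢ Vᶜ).image Prod.swap ↔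
      ((i ∈ V ∧ j ∉ V) ∨ (j ∈ V ∧ i ∉ V)) := by
  simp only [Finset.mem_union, Finset.mem_product, Finset.mem_image, Finset.mem_compl,
    Prod.exists, Prod.swap_prod_mk, Prod.mk.injEq]
  constructor
  · rintro (⟨h1, h2⟩ | ⟨a, b, ⟨ha, hb⟩, rfl, rfl⟩)
    · exact Or.inl ⟨h1, h2⟩
    · exact Or.inr ⟨ha, hb⟩
  · rintro (⟨h1, h2⟩ | ⟨h1, h2⟩)
    · exact Or.inl ⟨h1, h2⟩
    · exact Or.inr ⟨j, i, ⟨h1, h2⟩, rfl, rfl⟩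

lemma CT_KMK {n : ℕ} (V : Finset (Fin n)) (M0 : Matrix (Fin (2*n+1)) (Fin (2*n+1)) ℝ)
    (hlast : M0 (ilast n) (ilast n) = 1 ∧
      ∀ r : Fin (2*n+1), r ≠ ilast n → M0 r (ilast n) = 0 ∧ M0 (ilast n) r = 0)
    (hblock : ∀ i j : Fin n,
      ((i, j) ∉ (V ×ˢ Vᶜ) ∪ (V ×ˢ Vᶜ).image Prod.swap →
        ∃ x y : ℝ, M0 (ia i) (ia j) = x ∧ M0 (ia i) (ib j) = -y ∧
          M0 (ib i) (ia j) = y ∧ M0 (ib i) (ib j) = x) ∧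
      ((i, j) ∈ (V ×ˢ Vᶜ) ∪ (V ×ˢ Vᶜ).image Prod.swap →
        ∃ w z : ℝ, M0 (ia i) (ia j) = w ∧ M0 (ia i) (ib j) = z ∧
          M0 (ib i) (ia j) = z ∧ M0 (ib i) (ib j) = -w)) :
    CT n (Kmat n V * M0 * Kmat n V) := by
  refine ⟨?_, ?_, ?_⟩
  · rw [conj_apply, din_il, hlast.1]; ring
  · intro i
    rw [conj_apply, conj_apply, conj_apply, conj_apply,
      (hlast.2 (ia i) (ia_ne_il i)).1, (hlast.2 (ib i) (ib_ne_il i)).1,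
      (hlast.2 (ia i) (ia_ne_il i)).2, (hlast.2 (ib i) (ib_ne_il i)).2]
    refine ⟨by ring, by ring, by ring, by ring⟩
  · intro i j
    rw [conj_apply, conj_apply, conj_apply, conj_apply, din_ia, din_ia, din_ib, din_ib]
    by_cases hm : (i, j) ∈ (V ×ˢ Vᶜ) ∪ (V ×ˢ Vᶜ).image Prod.swap
    · obtain ⟨w, z, e1, e2, e3, e4⟩ := (hblock i j).2 hm
      rw [e1, e2, e3, e4]
      rcases (mem_block_iff V i j).1 hm with ⟨h1, h2⟩ | ⟨h1, h2⟩ <;>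
        simp [h1, h2] <;> ring
    · obtain ⟨x, y, e1, e2, e3, e4⟩ := (hblock i j).1 hm
      rw [e1, e2, e3, e4]
      have : (i ∈ V ∧ j ∈ V) ∨ (i ∉ V ∧ j ∉ V) := by
        by_cases h1 : i ∈ V <;> by_cases h2 : j ∈ V
        · exact Or.inl ⟨h1, h2⟩
        · exact absurd ((mem_block_iff V i j).2 (Or.inl ⟨h1, h2⟩)) hm
        · exact absurd ((mem_block_iff V i j).2 (Or.inr ⟨h2, h1⟩)) hm
        · exact Or.inr ⟨h1, h2⟩
      rcases this with ⟨h1, h2⟩ | ⟨h1, h2⟩ <;> simp [h1, h2]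


noncomputable def epsv {n : ℕ} (V : Finset (Fin n)) (i : Fin n) : ℝ :=
  if i ∈ V then 1 else -1

noncomputable def Dmat (n : ℕ) (V : Finset (Fin n)) (θ : Fin n → ℝ) :
    Matrix (Fin n) (Fin n) ℂ :=
  Matrix.diagonal fun i => Complex.exp (↑(epsv V i * θ i) * Complex.I)

lemma phi_Dmat {n : ℕ} (V : Finset (Fin n)) (θ : Fin n → ℝ) :
    phi n (Dmat n V θ) = Kmat n V * torusMat n θ * Kmat n V := by
  funext r c
  simp only [Dmat]
  rcases tri r with ⟨i, rfl⟩ | ⟨i, rfl⟩ | rfl <;>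
    rcases tri c with ⟨j, rfl⟩ | ⟨j, rfl⟩ | rfl
  · rw [phi_aa, conj_apply, din_ia, din_ia, tor_aa]
    by_cases h : i = j
    · subst h
      rw [Matrix.diagonal_apply_eq, if_pos rfl, Complex.exp_ofReal_mul_I_re]
      simp only [epsv]
      split <;> simp [Real.cos_neg]
    · rw [Matrix.diagonal_apply_ne _ h, if_neg h]; simp
  · rw [phi_ab, conj_apply, din_ia, din_ib, tor_ab]
    by_cases h : i = j
    · subst h
      rw [Matrix.diagonal_apply_eq, Complex.exp_ofReal_mul_I_im, if_pos rfl]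
      simp only [epsv]
      split <;> simp [Real.sin_neg] <;> ring
    · rw [Matrix.diagonal_apply_ne _ h, if_neg h]; simp
  · rw [phi_al, conj_apply, tor_al]; ring
  · rw [phi_ba, conj_apply, din_ia, din_ib, tor_ba]
    by_cases h : i = j
    · subst h
      rw [Matrix.diagonal_apply_eq, Complex.exp_ofReal_mul_I_im, if_pos rfl]
      simp only [epsv]
      split <;> simp [Real.sin_neg] <;> ring
    · rw [Matrix.diagonal_apply_ne _ h, if_neg h]; simp
  · rw [phi_bb, conj_apply, din_ib, din_ib, tor_bb]
    by_cases h : i = j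
    · subst h
      rw [Matrix.diagonal_apply_eq, Complex.exp_ofReal_mul_I_re, if_pos rfl]
      simp only [epsv]
      split <;> simp [Real.cos_neg]
    · rw [Matrix.diagonal_apply_ne _ h, if_neg h]; simp
  · rw [phi_bl, conj_apply, tor_bl]; ring
  · rw [phi_la, conj_apply, tor_la]; ring
  · rw [phi_lb, conj_apply, tor_lb]; ring
  · rw [phi_ll, conj_apply, tor_ll, din_il]; ring

lemma Dmat_det {n : ℕ} (V : Finset (Fin n)) (θ : Fin n → ℝ)
    (h : (Dmat n V θ).det = 1) :
    ∃ k : ℤ, ∑ i, epsv V i * θ i = 2 * Real.pi * k := by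
  rw [Dmat, Matrix.det_diagonal, ← Complex.exp_sum, Complex.exp_eq_one_iff] at h
  obtain ⟨k, hk⟩ := h
  refine ⟨k, ?_⟩
  have h1 : ((∑ i, epsv V i * θ i : ℝ) : ℂ) * Complex.I
      = (k : ℂ) * (2 * Real.pi * Complex.I) := by
    rw [← hk]
    push_cast [Finset.sum_mul]
    rfl
  have h3 : ((∑ i, epsv V i * θ i : ℝ) : ℂ) = (k : ℂ) * (2 * Real.pi) := by
    apply mul_right_cancel₀ Complex.I_ne_zero
    rw [h1]; ring
  have h4 : (∑ i, epsv V i * θ i) = (k : ℝ) * (2 * Real.pi) := by exact_mod_cast h3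
  rw [h4]; ring

theorem stmt4 (n g : ℕ) (hn : 2 ≤ n) (hg : 2 ≤ g)
    (V : Finset (Fin n)) (hV : V.Nonempty ∧ V ≠ Finset.univ)
    (B : Finset (Fin n × Fin n)) (hB : B = V ×ˢ Vᶜ)
    (M : Fin (2*g) → Matrix (Fin (2*n+1)) (Fin (2*n+1)) ℝ)
    (hSO : ∀ l, SOodd n (M l))
    (hlast : ∀ l, M l (ilast n) (ilast n) = 1 ∧
      ∀ r : Fin (2*n+1), r ≠ ilast n → M l r (ilast n) = 0 ∧ M l (ilast n) r = 0)
    (hblock : ∀ l (i j : Fin n),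
      ((i, j) ∉ B ∪ B.image Prod.swap →
        ∃ x y : ℝ, M l (ia i) (ia j) = x ∧ M l (ia i) (ib j) = -y ∧
          M l (ib i) (ia j) = y ∧ M l (ib i) (ib j) = x) ∧
      ((i, j) ∈ B ∪ B.image Prod.swap →
        ∃ w z : ℝ, M l (ia i) (ia j) = w ∧ M l (ia i) (ib j) = z ∧
          M l (ib i) (ia j) = z ∧ M l (ib i) (ib j) = -w))
    (θ : Fin n → ℝ) (hgen : IsGeneric n θ) :
    ((List.finRange g).map (fun l =>
        commMat n (M ⟨2*l.val, by have := l.isLt; omega⟩)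
                  (M ⟨2*l.val+1, by have := l.isLt; omega⟩))).prod
      ≠ torusMat n θ := by
  intro h
  subst hB
  set K := Kmat n V with hKdef
  have hKK : K * K = 1 := Kmat_mul_self V
  have hconj2 : ∀ X Y : Matrix (Fin (2*n+1)) (Fin (2*n+1)) ℝ,
      (K * X * K) * (K * Y * K) = K * (X * Y) * K := by
    intro X Y
    rw [show (K * X * K) * (K * Y * K) = K * X * ((K * K) * (Y * K)) by noncomm_ring,
      hKK, one_mul, show K * X * (Y * K) = K * (X * Y) * K by noncomm_ring]
  -- transpose conjugation
  have hTK : ∀ l, (K * M l * K)ᵀ = K * (M l)ᵀ * K := by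
    intro l
    rw [Matrix.transpose_mul, Matrix.transpose_mul, Kmat_transpose, Matrix.mul_assoc]
  -- complex matrices
  set Am : Fin (2*g) → Matrix (Fin n) (Fin n) ℂ := fun l => toC n (K * M l * K) with hAmdef
  set Bm : Fin (2*g) → Matrix (Fin n) (Fin n) ℂ :=
    fun l => toC n ((K * M l * K)ᵀ) with hBmdef
  have hCT : ∀ l, CT n (K * M l * K) := fun l => CT_KMK V (M l) (hlast l) (hblock l)
  have hAm : ∀ l, phi n (Am l) = K * M l * K := fun l => CT_phi_eq (hCT l)
  have hBm : ∀ l, phi n (Bm l) = (K * M l * K)ᵀ := fun l => CT_phi_eq (CT_transpose (hCT l))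
  have hABone : ∀ l, Am l * Bm l = 1 := by
    intro l
    apply phi_inj
    rw [phi_mul, phi_one, hAm, hBm, hTK, hconj2, (hSO l).1, Matrix.mul_one, hKK]
  -- commutators
  have hMinv : ∀ l, (M l)⁻¹ = (M l)ᵀ := fun l => Matrix.inv_eq_right_inv (hSO l).1
  set Cm : Fin g → Matrix (Fin n) (Fin n) ℂ := fun l =>
    Am ⟨2*l.val, by have := l.isLt; omega⟩ * Am ⟨2*l.val+1, by have := l.isLt; omega⟩ *
    Bm ⟨2*l.val, by have := l.isLt; omega⟩ * Bm ⟨2*l.val+1, by have := l.isLt; omega⟩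
    with hCmdef
  set F : Fin g → Matrix (Fin (2*n+1)) (Fin (2*n+1)) ℝ := fun l =>
    commMat n (M ⟨2*l.val, by have := l.isLt; omega⟩)
              (M ⟨2*l.val+1, by have := l.isLt; omega⟩) with hFdef
  have hcomm : ∀ l : Fin g, K * F l * K = phi n (Cm l) := by
    intro l
    rw [hCmdef, phi_mul, phi_mul, phi_mul, hAm, hAm, hBm, hBm, hTK, hTK,
      hconj2, hconj2, hconj2, hFdef]
    simp only [commMat, hMinv]
  have hlistconj : ∀ L : List (Fin g),
      K * (L.map F).prod * K = phi n ((L.map Cm).prod) := by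
    intro L
    induction L with
    | nil => simp only [List.map_nil, List.prod_nil, Matrix.mul_one, hKK, phi_one]
    | cons a L ih =>
        simp only [List.map_cons, List.prod_cons]
        rw [phi_mul, ← hcomm, ← ih, hconj2]
  -- combine
  have hmain : ((List.finRange g).map Cm).prod = Dmat n V θ := by
    apply phi_inj
    rw [← hlistconj, h, phi_Dmat]
  have hdetC : ∀ l : Fin g, (Cm l).det = 1 := by
    intro l
    have h1 : (Am ⟨2*l.val, by have := l.isLt; omega⟩).det *
        (Bm ⟨2*l.val, by have := l.isLt; omega⟩).det = 1 := by
      rw [← Matrix.det_mul, hABone, Matrix.det_one]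
    have h2 : (Am ⟨2*l.val+1, by have := l.isLt; omega⟩).det *
        (Bm ⟨2*l.val+1, by have := l.isLt; omega⟩).det = 1 := by
      rw [← Matrix.det_mul, hABone, Matrix.det_one]
    simp only [hCmdef]
    simp only [Matrix.det_mul]
    rw [mul_assoc, mul_mul_mul_comm, h1, h2, one_mul]
  have hdet : (Dmat n V θ).det = 1 := by
    rw [← hmain]
    rw [show (((List.finRange g).map Cm).prod).det
        = (((List.finRange g).map Cm).map Matrix.det).prod from by
      rw [← Matrix.coe_detMonoidHom, map_list_prod]]
    apply List.prod_eq_one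
    intro x hx
    simp only [List.mem_map] at hx
    obtain ⟨y, ⟨l, _, rfl⟩, rfl⟩ := hx
    exact hdetC l
  obtain ⟨k, hk⟩ := Dmat_det V θ hdet
  set lam : Fin n → ℤ := fun i => if i ∈ V then 1 else -1 with hlamdef
  have hsum : ∑ i, (lam i : ℝ) * θ i = ∑ i, epsv V i * θ i := by
    apply Finset.sum_congr rfl
    intro i _
    simp only [hlamdef, epsv]
    split <;> norm_num
  have hall := hgen.2 lam (fun i => by
      simp only [hlamdef]; split
      · exact Or.inr (Or.inr rfl)
      · exact Or.inl rfl)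
    ⟨k, by rw [hsum]; exact hk⟩
  have := hall ⟨0, by omega⟩
  simp only [hlamdef] at this
  split at this <;> omega
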